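/- With a' = −(a+b)a, b' = −ab, a(0) = ν₀₁ > 0, b(0) = ν₁₀ > 0, the solution satisfies a(t) → 0 as t → ∞ (the B-groups are asymptotically fully consumed, i.e. μ₀₁(t) → ν₀₁). -/

import Mathlib

open Set Filter

/-- If `f' = -(c·f)` on `[0,∞)` with `c` continuous there and `f 0 > 0`, then `f > 0` on
`[0,∞)`. -/
lemma pos_aux {f c : ℝ → ℝ}
    (hf : ∀ t ≥ (0:ℝ), HasDerivAt f (-(c t * f t)) t)
    (hc : ∀ t ≥ (0:ℝ), ContinuousAt c t)
    (h0 : 0 < f 0) : ∀ t ≥ (0:ℝ), 0 < f t := by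
  by_contra h
  push_neg at h
  obtain ⟨T, hT0, hTf⟩ := h
  have hfc : ∀ t ≥ (0:ℝ), ContinuousAt f t := fun t ht => (hf t ht).continuousAt
  set S : Set ℝ := {t | 0 ≤ t ∧ f t ≤ 0} with hS
  have hSne : S.Nonempty := ⟨T, hT0, hTf⟩
  have hSbdd : BddBelow S := ⟨0, fun x hx => hx.1⟩
  have hSclosed : IsClosed S := by
    rw [← isOpen_compl_iff]
    rw [isOpen_iff_mem_nhds]
    intro x hx
    rcases lt_or_ge x 0 with hx0 | hx0
    · exact Filter.mem_of_superset (Iio_mem_nhds hx0) (fun y hy hyS => absurd hyS.1 (not_le.2 hy))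
    · have hxS : 0 < f x := by
        rcases lt_or_ge 0 (f x) with h' | h'
        · exact h'
        · exact absurd ⟨hx0, h'⟩ hx
      have := (hfc x hx0).preimage_mem_nhds (Ioi_mem_nhds hxS)
      exact Filter.mem_of_superset this (fun y hy hyS => absurd hyS.2 (not_le.2 hy))
  set t₀ := sInf S with ht₀
  have ht₀S : t₀ ∈ S := hSclosed.csInf_mem hSne hSbdd
  have ht₀0 : 0 ≤ t₀ := ht₀S.1
  have ht₀f : f t₀ ≤ 0 := ht₀S.2
  have ht₀pos : 0 < t₀ := by
    rcases ht₀0.lt_or_eq with h' | h'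
    · exact h'
    · exact absurd (h' ▸ ht₀f) (not_le.2 h0)
  have hfpos : ∀ t ∈ Ico (0:ℝ) t₀, 0 < f t := by
    intro t ⟨ht0, htt₀⟩
    by_contra h'
    push_neg at h'
    exact absurd (csInf_le hSbdd ⟨ht0, h'⟩) (not_le.2 htt₀)
  -- f t₀ = 0 by left continuity
  have hft₀ : f t₀ = 0 := by
    refine le_antisymm ht₀f ?_
    have htend : Tendsto f (nhdsWithin t₀ (Iio t₀)) (nhds (f t₀)) :=
      ((hfc t₀ ht₀0).tendsto).mono_left nhdsWithin_le_nhds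
    refine ge_of_tendsto htend ?_
    filter_upwards [Ioo_mem_nhdsLT_of_mem ⟨ht₀pos, le_refl t₀⟩] with y hy
    exact (hfpos y ⟨hy.1.le, hy.2⟩).le
  -- bound for c on [0, t₀]
  obtain ⟨z, hz, hzmax⟩ := isCompact_Icc.exists_isMaxOn (f := c) (Set.nonempty_Icc.2 ht₀0)
    (fun x hx => (hc x hx.1).continuousWithinAt)
  set K := c z with hK
  have hKc : ∀ s ∈ Icc (0:ℝ) t₀, c s ≤ K := fun s hs => hzmax hs
  -- g t = f t * exp (K t) is monotone on [0, t₀]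
  set g : ℝ → ℝ := fun t => f t * Real.exp (K * t) with hg
  have hgderiv : ∀ t ∈ Icc (0:ℝ) t₀, HasDerivAt g (f t * Real.exp (K * t) * (K - c t)) t := by
    intro t ht
    have h1 : HasDerivAt (fun t => Real.exp (K * t)) (Real.exp (K * t) * K) t := by
      simpa [mul_comm] using (HasDerivAt.exp ((hasDerivAt_id t).const_mul K))
    have : HasDerivAt g (-(c t * f t) * Real.exp (K * t) + f t * (Real.exp (K * t) * K)) t :=
      (hf t ht.1).mul h1
    convert this using 1
    ring
  have hgmono : MonotoneOn g (Icc 0 t₀) := by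
    apply monotoneOn_of_deriv_nonneg (convex_Icc 0 t₀)
    · intro x hx
      exact ((hgderiv x hx).continuousAt).continuousWithinAt
    · intro x hx
      rw [interior_Icc] at hx
      exact ((hgderiv x ⟨hx.1.le, hx.2.le⟩).differentiableAt).differentiableWithinAt
    · intro x hx
      rw [interior_Icc] at hx
      rw [(hgderiv x ⟨hx.1.le, hx.2.le⟩).deriv]
      have h1 : 0 < f x := hfpos x ⟨hx.1.le, hx.2⟩
      have h2 : 0 ≤ K - c x := sub_nonneg.2 (hKc x ⟨hx.1.le, hx.2.le⟩)
      positivity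
  have h1 : g 0 ≤ g t₀ := hgmono ⟨le_refl 0, ht₀0⟩ ⟨ht₀0, le_refl t₀⟩ ht₀0
  have h2 : g 0 = f 0 := by simp [hg]
  have h3 : g t₀ = 0 := by simp [hg, hft₀]
  rw [h2, h3] at h1
  exact absurd h1 (not_le.2 h0)

theorem stmt_8 (ν01 ν10 : ℝ) (hν01 : 0 < ν01) (hν10 : 0 < ν10)
    (a b : ℝ → ℝ) (ha0 : a 0 = ν01) (hb0 : b 0 = ν10)
    (ha : ∀ t ≥ (0:ℝ), HasDerivAt a (-((a t + b t) * a t)) t)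
    (hb : ∀ t ≥ (0:ℝ), HasDerivAt b (-(a t * b t)) t) :
    Filter.Tendsto a Filter.atTop (nhds 0) := by
  have hbpos : ∀ t ≥ (0:ℝ), 0 < b t :=
    pos_aux hb (fun t ht => (ha t ht).continuousAt) (hb0 ▸ hν10)
  have hapos : ∀ t ≥ (0:ℝ), 0 < a t := by
    refine pos_aux (c := fun t => a t + b t) ha
      (fun t ht => ((ha t ht).continuousAt).add ((hb t ht).continuousAt)) (ha0 ▸ hν01)
  -- a is antitone on [0, ∞)
  have hanti : AntitoneOn a (Ici 0) := by
    apply antitoneOn_of_deriv_nonpos (convex_Ici 0)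
    · exact fun x hx => ((ha x hx).continuousAt).continuousWithinAt
    · intro x hx
      rw [interior_Ici] at hx
      exact ((ha x (le_of_lt hx)).differentiableAt).differentiableWithinAt
    · intro x hx
      rw [interior_Ici] at hx
      rw [(ha x hx.le).deriv]
      have h1 := hapos x hx.le
      have h2 := hbpos x hx.le
      nlinarith
  rw [Metric.tendsto_atTop]
  intro ε hε
  -- claim: ∃ T ≥ 0, a T < ε
  have key : ∃ T ≥ (0:ℝ), a T < ε := by
    by_contra h
    push_neg at h
    -- then a t ≥ ε for all t ≥ 0, so a t + ε² t is antitone ⇒ a t ≤ ν01 - ε² t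
    set h₂ : ℝ → ℝ := fun t => a t + ε ^ 2 * t with hh₂
    have hhanti : AntitoneOn h₂ (Ici 0) := by
      apply antitoneOn_of_deriv_nonpos (convex_Ici 0)
      · intro x hx
        exact (((ha x hx).continuousAt).add (continuousAt_const.mul continuousAt_id)).continuousWithinAt
      · intro x hx
        rw [interior_Ici] at hx
        exact (((ha x hx.le).add
          (((hasDerivAt_id x).const_mul (ε ^ 2)))).differentiableAt).differentiableWithinAt
      · intro x hx
        rw [interior_Ici] at hx
        have hd : HasDerivAt h₂ (-((a x + b x) * a x) + ε ^ 2 * 1) x :=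
          (ha x hx.le).add ((hasDerivAt_id x).const_mul (ε ^ 2))
        rw [hd.deriv]
        have h1 := h x hx.le
        have h2 := hbpos x hx.le
        nlinarith
    set T := ν01 / ε ^ 2 + 1 with hT
    have hTpos : 0 < T := by positivity
    have := hhanti (self_mem_Ici) (mem_Ici.2 hTpos.le) hTpos.le
    simp only [hh₂, mul_zero, add_zero, ha0] at this
    have haT := h T hTpos.le
    have : a T ≤ ν01 - ε ^ 2 * T := by linarith
    have hearly : ν01 - ε ^ 2 * T < ε := by
      rw [hT]
      have : ε ^ 2 * (ν01 / ε ^ 2 + 1) = ν01 + ε ^ 2 := by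
        field_simp
      nlinarith
    linarith
  obtain ⟨T, hT0, hTε⟩ := key
  refine ⟨T, fun t ht => ?_⟩
  have ht0 : (0:ℝ) ≤ t := hT0.trans ht
  have h1 : a t ≤ a T := hanti (mem_Ici.2 hT0) (mem_Ici.2 ht0) ht
  have h2 : 0 < a t := hapos t ht0
  rw [Real.dist_eq]
  rw [abs_of_pos (by linarith)]
  linarith
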